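/- Let n ≥ 1 and let s_{n+1}, ..., s_{2n+1} be real-valued random variables on a probability space whose joint distribution is exchangeable (invariant under every permutation of the indices n+1, ..., 2n+1). Define the marginal conformal p-value p = (1 + #{i ∈ {n+1,...,2n} : s_i ≤ s_{2n+1}})/(n+1). Then for every t ∈ [0,1], P(p ≤ t) ≤ t. -/

import Mathlib

open MeasureTheory ProbabilityTheory Finset ENNReal

lemma card_low_rank_le {n : ℕ} (v : Fin (n + 1) → ℝ) (k : ℕ) :
    (univ.filter (fun j => (univ.filter (fun i => v i ≤ v j)).card ≤ k)).card ≤ k := by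
  set S := univ.filter (fun j => (univ.filter (fun i => v i ≤ v j)).card ≤ k) with hSdef
  by_cases hS : S.Nonempty
  · obtain ⟨j, hjS, hj⟩ := S.exists_max_image v hS
    have hsub : S ⊆ univ.filter (fun i => v i ≤ v j) := by
      intro i hi
      simp only [mem_filter, mem_univ, true_and]
      exact hj i hi
    have h1 : S.card ≤ (univ.filter (fun i => v i ≤ v j)).card := card_le_card hsub
    have h2 : (univ.filter (fun i => v i ≤ v j)).card ≤ k := by
      rw [hSdef] at hjS
      simp only [mem_filter, mem_univ, true_and] at hjS
      exact hjS
    omega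
  · simp [Finset.not_nonempty_iff_eq_empty.mp hS]

theorem marginal_conformal_pvalue_valid
    {Ω : Type*} [MeasurableSpace Ω] (P : Measure Ω) [IsProbabilityMeasure P]
    (n : ℕ) (hn : 1 ≤ n)
    (s : Fin (n + 1) → Ω → ℝ)
    (hmeas : ∀ i, Measurable (s i))
    (hexch : ∀ σ : Equiv.Perm (Fin (n + 1)),
      Measure.map (fun ω i => s (σ i) ω) P = Measure.map (fun ω i => s i ω) P)
    (p : Ω → ℝ)
    (hp : ∀ ω, p ω =
      (((Finset.univ.filter
          (fun i : Fin n => s i.castSucc ω ≤ s (Fin.last n) ω)).card : ℝ) + 1) / (n + 1))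
    (t : ℝ) (ht : t ∈ Set.Icc (0 : ℝ) 1) :
    P {ω | p ω ≤ t} ≤ ENNReal.ofReal t := by
  obtain ⟨ht0, ht1⟩ := ht
  set k : ℕ := ⌊t * (n + 1)⌋₊ with hk
  -- counting function on vectors
  set G : Fin (n + 1) → (Fin (n + 1) → ℝ) → ℕ :=
    fun j v => (univ.filter (fun i => v i ≤ v j)).card with hG
  have hGmeas : ∀ j, Measurable (G j) := by
    intro j
    simp only [hG, Finset.card_filter]
    exact Finset.measurable_sum _ (fun i _ =>
      Measurable.ite (measurableSet_le (measurable_pi_apply i) (measurable_pi_apply j))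
        measurable_const measurable_const)
  set N : Fin (n + 1) → Ω → ℕ := fun j ω => G j (fun i => s i ω) with hN
  have hsvec : Measurable (fun ω i => s i ω) := measurable_pi_lambda _ hmeas
  have hNmeas : ∀ j, Measurable (N j) := fun j => (hGmeas j).comp hsvec
  set A : Fin (n + 1) → Set Ω := fun j => {ω | N j ω ≤ k} with hA
  have hAmeas : ∀ j, MeasurableSet (A j) := fun j => (hNmeas j) measurableSet_Iic
  -- equal probabilities by exchangeability
  have hPeq : ∀ j, P (A j) = P (A (Fin.last n)) := by
    intro j
    set σ : Equiv.Perm (Fin (n + 1)) := Equiv.swap (Fin.last n) j with hσ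
    have hσlast : σ (Fin.last n) = j := Equiv.swap_apply_left _ _
    have hσvec : Measurable (fun ω i => s (σ i) ω) :=
      measurable_pi_lambda _ (fun i => hmeas (σ i))
    have hset : MeasurableSet {v : Fin (n + 1) → ℝ | G (Fin.last n) v ≤ k} :=
      (hGmeas (Fin.last n)) measurableSet_Iic
    have h1 : P (A (Fin.last n)) =
        (Measure.map (fun ω i => s i ω) P) {v | G (Fin.last n) v ≤ k} := by
      rw [Measure.map_apply hsvec hset]
      rfl
    have h2 : (Measure.map (fun ω i => s (σ i) ω) P) {v | G (Fin.last n) v ≤ k}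
        = P (A j) := by
      rw [Measure.map_apply hσvec hset]
      congr 1
      ext ω
      simp only [Set.mem_preimage, Set.mem_setOf_eq, hA, hN, hG, Finset.card_filter]
      simp only [hσlast]
      constructor
      · intro h
        calc (∑ i : Fin (n+1), if s i ω ≤ s j ω then 1 else 0)
            = ∑ i : Fin (n+1), if s (σ i) ω ≤ s j ω then 1 else 0 :=
              (Equiv.sum_comp σ (fun i => if s i ω ≤ s j ω then 1 else 0)).symm
          _ ≤ k := h
      · intro h
        calc (∑ i : Fin (n+1), if s (σ i) ω ≤ s j ω then 1 else 0)
            = ∑ i : Fin (n+1), if s i ω ≤ s j ω then 1 else 0 :=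
              Equiv.sum_comp σ (fun i => if s i ω ≤ s j ω then 1 else 0)
          _ ≤ k := h
    rw [h1, ← hexch σ, h2]
  -- sum bound
  have hsum : ∑ j : Fin (n + 1), P (A j) ≤ (k : ℝ≥0∞) := by
    have h1 : ∑ j : Fin (n + 1), P (A j)
        = ∫⁻ ω, ∑ j : Fin (n + 1), (A j).indicator (fun _ => (1 : ℝ≥0∞)) ω ∂P := by
      rw [lintegral_finset_sum _ (fun j _ => (measurable_const.indicator (hAmeas j)))]
      refine Finset.sum_congr rfl (fun j _ => ?_)
      exact (lintegral_indicator_one (hAmeas j)).symm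
    rw [h1]
    calc ∫⁻ ω, ∑ j : Fin (n + 1), (A j).indicator (fun _ => (1 : ℝ≥0∞)) ω ∂P
        ≤ ∫⁻ _, (k : ℝ≥0∞) ∂P := by
          refine lintegral_mono (fun ω => ?_)
          have hcount : ∑ j : Fin (n + 1), (A j).indicator (fun _ => (1 : ℝ≥0∞)) ω
              = ((univ.filter (fun j => N j ω ≤ k)).card : ℝ≥0∞) := by
            rw [Finset.card_filter, Nat.cast_sum]
            refine Finset.sum_congr rfl (fun j _ => ?_)
            simp only [Set.indicator_apply, hA, Set.mem_setOf_eq]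
            split <;> simp
          rw [hcount]
          exact Nat.cast_le.mpr (card_low_rank_le (fun i => s i ω) k)
      _ = (k : ℝ≥0∞) := by simp
  have hmul : ((n : ℝ≥0∞) + 1) * P (A (Fin.last n)) ≤ (k : ℝ≥0∞) := by
    have : ∑ j : Fin (n + 1), P (A j) = ((n : ℝ≥0∞) + 1) * P (A (Fin.last n)) := by
      rw [Finset.sum_congr rfl (fun j _ => hPeq j)]
      simp [mul_comm]
    rw [← this]; exact hsum
  -- identify the event
  have hev : {ω | p ω ≤ t} = A (Fin.last n) := by
    ext ω
    simp only [Set.mem_setOf_eq, hA, hN, hG]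
    set C : ℕ := (univ.filter (fun i : Fin n => s i.castSucc ω ≤ s (Fin.last n) ω)).card with hC
    have hNlast : (univ.filter (fun i : Fin (n+1) => s i ω ≤ s (Fin.last n) ω)).card = C + 1 := by
      rw [Finset.card_filter, Fin.sum_univ_castSucc, if_pos le_rfl, hC, Finset.card_filter]
    rw [hNlast, hp ω]
    have hpos : (0 : ℝ) < (n : ℝ) + 1 := by positivity
    rw [div_le_iff₀ hpos, ← hC]
    constructor
    · intro h
      rw [hk]
      rw [Nat.le_floor_iff (by positivity)]
      push_cast
      linarith
    · intro h
      have := (Nat.le_floor_iff (α := ℝ) (by positivity : (0:ℝ) ≤ t * (n+1))).mp h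
      push_cast at this
      linarith
  rw [hev]
  -- final arithmetic
  have hk_le : ((k : ℝ≥0∞)) ≤ ENNReal.ofReal t * ((n : ℝ≥0∞) + 1) := by
    have h1 : (k : ℝ) ≤ t * (n + 1) := Nat.floor_le (by positivity)
    calc (k : ℝ≥0∞) = ENNReal.ofReal (k : ℝ) := by simp
      _ ≤ ENNReal.ofReal (t * (n + 1)) := ENNReal.ofReal_le_ofReal h1
      _ = ENNReal.ofReal t * ENNReal.ofReal ((n : ℝ) + 1) :=
          ENNReal.ofReal_mul ht0
      _ = ENNReal.ofReal t * ((n : ℝ≥0∞) + 1) := by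
          congr 1
          rw [ENNReal.ofReal_add (by positivity) zero_le_one]
          simp
  have hne0 : ((n : ℝ≥0∞) + 1) ≠ 0 := by simp
  have hnetop : ((n : ℝ≥0∞) + 1) ≠ ⊤ := by simp [ENNReal.add_ne_top]
  have hfin : P (A (Fin.last n)) * ((n : ℝ≥0∞) + 1) ≤ ENNReal.ofReal t * ((n : ℝ≥0∞) + 1) := by
    rw [mul_comm]; exact le_trans hmul hk_le
  exact (ENNReal.mul_le_mul_iff_left hne0 hnetop).mp hfin
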